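/- arXiv:math/0602005 — 2 statements merged into one kernel-verified Lean document; each statement's English description precedes it below -/
import Mathlib

section
/- Suppose: (1) the kernel of Γ is spanned by a unit vector v ∈ ℝ^m with strictly positive entries; (2) every solution of Ṡ = ΓR(S) on ℝⁿ_{≥0} is bounded; (3) σ ∈ ℝⁿ_{≥0} is such that the extent system ẋ = R(σ + Γx) on X_σ is strongly monotone with respect to a closed pointed convex cone K ⊆ ℝ^m with v ∈ interior(K) (i.e., for its forward-complete flow ψ_t, x₁ ≻ x₂ implies ψ_t(x₁) ≫ ψ_t(x₂) for all t > 0). Then there exists ζ = ζ_σ ∈ ℝⁿ_{≥0} such that for every ρ ∈ ℝⁿ_{≥0} with ρ − σ ∈ Image(Γ), the solution S(t) of Ṡ = ΓR(S) with S(0) = ρ satisfies S(t) → ζ as t → ∞. -/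
open Filter Topology Set
set_option linter.unusedSectionVars false

/-- General forward uniqueness for ODEs with locally-Lipschitz-on-a-set RHS. -/
theorem stmt17_uniq {E : Type*} [NormedAddCommGroup E] [NormedSpace ℝ E]
    {F : E → E} {Ω : Set E}
    (hF : ∀ y ∈ Ω, ∃ L : NNReal, ∃ U ∈ 𝓝[Ω] y, LipschitzOnWith L F U)
    {f g : ℝ → E}
    (hf : ∀ t : ℝ, 0 ≤ t → f t ∈ Ω ∧ HasDerivWithinAt f (F (f t)) (Set.Ici 0) t)
    (hg : ∀ t : ℝ, 0 ≤ t → g t ∈ Ω ∧ HasDerivWithinAt g (F (g t)) (Set.Ici 0) t)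
    (h0 : f 0 = g 0) : ∀ t : ℝ, 0 ≤ t → f t = g t := by
  have hfc : ContinuousOn f (Ici 0) := fun s hs => ((hf s hs).2).continuousWithinAt
  have hgc : ContinuousOn g (Ici 0) := fun s hs => ((hg s hs).2).continuousWithinAt
  intro t ht
  rcases eq_or_lt_of_le ht with h | ht
  · rw [← h]; exact h0
  set A : Set ℝ := {s : ℝ | s ∈ Icc 0 t ∧ Set.EqOn f g (Icc 0 s)} with hA
  have h0A : (0 : ℝ) ∈ A := by
    refine ⟨⟨le_refl 0, le_of_lt ht⟩, ?_⟩
    intro u hu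
    have : u = 0 := le_antisymm hu.2 hu.1
    rw [this]; exact h0
  have hAne : A.Nonempty := ⟨0, h0A⟩
  have hAbdd : BddAbove A := ⟨t, fun s hs => hs.1.2⟩
  set T := sSup A with hT
  have hT0 : 0 ≤ T := le_csSup hAbdd h0A
  have hTt : T ≤ t := csSup_le hAne fun s hs => hs.1.2
  -- f = g on [0, T]
  have hTeq : Set.EqOn f g (Icc 0 T) := by
    intro u hu
    rcases eq_or_lt_of_le hu.2 with h | h
    · -- u = T : use continuity
      rcases eq_or_lt_of_le hu.1 with h' | h'
      · rw [← h']; exact h0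
      · -- 0 < u = T
        rw [h]
        have h'' : 0 < T := h ▸ h'
        have hne : (𝓝[Ico 0 T] T).NeBot := by
          apply mem_closure_iff_nhdsWithin_neBot.mp
          rw [closure_Ico (ne_of_lt h'')]
          exact ⟨hT0, le_refl T⟩
        have hfu : Tendsto f (𝓝[Ico 0 T] T) (𝓝 (f T)) :=
          ((hfc T hT0).mono (Ico_subset_Icc_self.trans (Icc_subset_Ici_self)))
        have hgu : Tendsto g (𝓝[Ico 0 T] T) (𝓝 (g T)) :=
          ((hgc T hT0).mono (Ico_subset_Icc_self.trans (Icc_subset_Ici_self)))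
        have heq : f =ᶠ[𝓝[Ico 0 T] T] g := by
          apply eventually_nhdsWithin_of_forall
          intro s hs
          obtain ⟨a, haA, has⟩ := exists_lt_of_lt_csSup hAne hs.2
          exact haA.2 ⟨hs.1, le_of_lt has⟩
        exact tendsto_nhds_unique (hfu.congr' heq) hgu
    · obtain ⟨a, haA, hua⟩ := exists_lt_of_lt_csSup hAne h
      exact haA.2 ⟨hu.1, le_of_lt hua⟩
  -- T = t
  rcases eq_or_lt_of_le hTt with hTeqt | hTlt
  · exact hTeq ⟨ht.le, by rw [hTeqt]⟩
  · exfalso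
    obtain ⟨L, U, hU, hLip⟩ := hF (f T) (hf T hT0).1
    rw [mem_nhdsWithin] at hU
    obtain ⟨V, hVopen, hVmem, hVU⟩ := hU
    have hgT : g T = f T := (hTeq ⟨hT0, le_refl T⟩).symm
    have hfV : ∀ᶠ s in 𝓝[Ici 0] T, f s ∈ V := (hfc T hT0).eventually (hVopen.mem_nhds hVmem)
    have hgV : ∀ᶠ s in 𝓝[Ici 0] T, g s ∈ V := by
      apply (hgc T hT0).eventually
      rw [hgT]
      exact hVopen.mem_nhds hVmem
    obtain ⟨ε, hε, hball⟩ := Metric.mem_nhdsWithin_iff.mp (hfV.and hgV)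
    set δ := min (ε / 2) (t - T) with hδ
    have hδpos : 0 < δ := lt_min (half_pos hε) (sub_pos.mpr hTlt)
    have hsub : Icc T (T + δ) ⊆ Metric.ball T ε ∩ Ici 0 := by
      intro s hs
      constructor
      · rw [Metric.mem_ball, Real.dist_eq, abs_of_nonneg (sub_nonneg.mpr hs.1)]
        calc s - T ≤ δ := by linarith [hs.2]
        _ ≤ ε / 2 := min_le_left _ _
        _ < ε := by linarith
      · exact le_trans hT0 hs.1
    have key : Set.EqOn f g (Icc T (T + δ)) := by
      apply ODE_solution_unique_of_mem_Icc_right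
        (v := fun _ y => F y) (s := fun _ => U) (K := L) (fun _ _ => hLip)
      · exact hfc.mono fun s hs => le_trans hT0 hs.1
      · intro s hs
        exact ((hf s (le_trans hT0 hs.1)).2).mono (Ici_subset_Ici.mpr (le_trans hT0 hs.1))
      · intro s hs
        have := hball (hsub (Ico_subset_Icc_self hs))
        exact hVU ⟨this.1, (hf s (le_trans hT0 hs.1)).1⟩
      · exact hgc.mono fun s hs => le_trans hT0 hs.1
      · intro s hs
        exact ((hg s (le_trans hT0 hs.1)).2).mono (Ici_subset_Ici.mpr (le_trans hT0 hs.1))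
      · intro s hs
        have := hball (hsub (Ico_subset_Icc_self hs))
        exact hVU ⟨this.2, (hg s (le_trans hT0 hs.1)).1⟩
      · exact hTeq ⟨hT0, le_refl T⟩
    have hTδA : T + δ ∈ A := by
      refine ⟨⟨by linarith, by have := min_le_right (ε/2) (t - T); linarith [hδpos.le]⟩, ?_⟩
      intro u hu
      rcases le_total u T with h | h
      · exact hTeq ⟨hu.1, h⟩
      · exact key ⟨h, hu.2⟩
    have : T + δ ≤ T := le_csSup hAbdd hTδA
    linarith


section st17cone

variable {m : ℕ} {K : Set (EuclideanSpace ℝ (Fin m))} {v : EuclideanSpace ℝ (Fin m)} {r : ℝ}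

/-- the "height" function of the cone order: least `c` with `z ⪯ c•v`. -/
noncomputable def st17e (K : Set (EuclideanSpace ℝ (Fin m))) (v z : EuclideanSpace ℝ (Fin m)) : ℝ :=
  sInf {c : ℝ | c • v - z ∈ K}

lemma st17_zero_mem (hKcone : ∀ c : ℝ, 0 ≤ c → ∀ x ∈ K, c • x ∈ K)
    (hv : v ∈ interior K) : (0 : EuclideanSpace ℝ (Fin m)) ∈ K := by
  simpa using hKcone 0 le_rfl v (interior_subset hv)

lemma st17_add_mem (hKconv : Convex ℝ K) (hKcone : ∀ c : ℝ, 0 ≤ c → ∀ x ∈ K, c • x ∈ K)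
    {x y : EuclideanSpace ℝ (Fin m)} (hx : x ∈ K) (hy : y ∈ K) : x + y ∈ K := by
  have hmid : (1/2 : ℝ) • x + (1/2 : ℝ) • y ∈ K :=
    hKconv hx hy (by norm_num) (by norm_num) (by norm_num)
  have := hKcone 2 (by norm_num) _ hmid
  have h2 : (2:ℝ) • ((1/2 : ℝ) • x + (1/2 : ℝ) • y) = x + y := by
    rw [smul_add, smul_smul, smul_smul]; norm_num
  rwa [h2] at this

lemma st17_scaledMem (hr : 0 < r) (hrK : ∀ u : EuclideanSpace ℝ (Fin m), ‖u‖ ≤ r → v + u ∈ K)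
    (hKcone : ∀ c : ℝ, 0 ≤ c → ∀ x ∈ K, c • x ∈ K)
    (z : EuclideanSpace ℝ (Fin m)) (c : ℝ) (h : ‖z‖ ≤ c * r) : c • v - z ∈ K := by
  have hc : 0 ≤ c := by
    by_contra hc
    push_neg at hc
    nlinarith [norm_nonneg z]
  rcases eq_or_lt_of_le hc with h0 | h0
  · have hz : z = 0 := by
      rw [← norm_le_zero_iff]
      rw [← h0] at h; simpa using h
    rw [hz, ← h0]
    have hvK : v ∈ K := by simpa using hrK 0 (by simp [hr.le])
    simpa using hKcone 0 le_rfl v hvK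
  · have h1 : ‖-(c⁻¹ • z)‖ ≤ r := by
      rw [norm_neg, norm_smul, Real.norm_eq_abs, abs_of_nonneg (inv_nonneg.mpr hc)]
      rw [inv_mul_le_iff₀ h0]
      linarith [h]
    have h2 := hrK _ h1
    have h3 := hKcone c hc _ h2
    have h4 : c • (v + -(c⁻¹ • z)) = c • v - z := by
      rw [smul_add, smul_neg, smul_smul, mul_inv_cancel₀ (ne_of_gt h0), one_smul]
      abel
    rwa [h4] at h3

lemma st17_vmem_iff (hKcone : ∀ c : ℝ, 0 ≤ c → ∀ x ∈ K, c • x ∈ K)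
    (hKpointed : ∀ x ∈ K, -x ∈ K → x = 0) (hvnorm : ‖v‖ = 1) (hv : v ∈ interior K)
    (a : ℝ) : a • v ∈ K ↔ 0 ≤ a := by
  constructor
  · intro h
    by_contra ha
    push_neg at ha
    have h2 : -(a • v) ∈ K := by
      rw [← neg_smul]
      exact hKcone (-a) (by linarith) v (interior_subset hv)
    have := hKpointed _ h h2
    rcases smul_eq_zero.mp this with h' | h'
    · linarith
    · rw [h'] at hvnorm; simp at hvnorm
  · intro ha
    exact hKcone a ha v (interior_subset hv)

lemma st17_e_spec (hKclosed : IsClosed K) (hKconv : Convex ℝ K)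
    (hKcone : ∀ c : ℝ, 0 ≤ c → ∀ x ∈ K, c • x ∈ K)
    (hKpointed : ∀ x ∈ K, -x ∈ K → x = 0) (hvnorm : ‖v‖ = 1) (hv : v ∈ interior K)
    (hr : 0 < r) (hrK : ∀ u : EuclideanSpace ℝ (Fin m), ‖u‖ ≤ r → v + u ∈ K)
    (z : EuclideanSpace ℝ (Fin m)) :
    (st17e K v z) • v - z ∈ K ∧ (∀ c : ℝ, c • v - z ∈ K → st17e K v z ≤ c) := by
  set S := {c : ℝ | c • v - z ∈ K} with hS
  have hSne : S.Nonempty := by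
    refine ⟨‖z‖ / r, ?_⟩
    exact st17_scaledMem hr hrK hKcone z _ (by rw [div_mul_cancel₀ _ (ne_of_gt hr)])
  have hSbdd : BddBelow S := by
    refine ⟨-(‖z‖ / r), ?_⟩
    intro c hc
    have h2 : (‖z‖ / r) • v - (-z) ∈ K :=
      st17_scaledMem hr hrK hKcone (-z) _ (by rw [norm_neg, div_mul_cancel₀ _ (ne_of_gt hr)])
    have h3 := st17_add_mem hKconv hKcone hc h2
    have h4 : (c • v - z) + ((‖z‖ / r) • v - -z) = (c + ‖z‖ / r) • v := by
      rw [add_smul]; abel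
    rw [h4] at h3
    have := (st17_vmem_iff hKcone hKpointed hvnorm hv _).mp h3
    linarith
  have hSclosed : IsClosed S := by
    have : S = (fun c : ℝ => c • v - z) ⁻¹' K := rfl
    rw [this]
    exact hKclosed.preimage ((continuous_id.smul continuous_const).sub continuous_const)
  exact ⟨hSclosed.csInf_mem hSne hSbdd, fun c hc => csInf_le hSbdd hc⟩

-- part 2



variable {m : ℕ} {K : Set (EuclideanSpace ℝ (Fin m))} {v : EuclideanSpace ℝ (Fin m)} {r : ℝ}


variable (hKclosed : IsClosed K) (hKconv : Convex ℝ K)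
    (hKcone : ∀ c : ℝ, 0 ≤ c → ∀ x ∈ K, c • x ∈ K)
    (hKpointed : ∀ x ∈ K, -x ∈ K → x = 0) (hvnorm : ‖v‖ = 1) (hv : v ∈ interior K)
    (hr : 0 < r) (hrK : ∀ u : EuclideanSpace ℝ (Fin m), ‖u‖ ≤ r → v + u ∈ K)


include hKclosed hKconv hKcone hKpointed hvnorm hv hr hrK

lemma st17_e_le_norm (z : (EuclideanSpace ℝ (Fin m))) : st17e K v z ≤ ‖z‖ / r := by
  obtain ⟨_, hmin⟩ := st17_e_spec hKclosed hKconv hKcone hKpointed hvnorm hv hr hrK z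
  exact hmin _ (st17_scaledMem hr hrK hKcone z _ (by rw [div_mul_cancel₀ _ (ne_of_gt hr)]))

lemma st17_e_add (z z' : (EuclideanSpace ℝ (Fin m))) : st17e K v (z + z') ≤ st17e K v z + st17e K v z' := by
  obtain ⟨h1, _⟩ := st17_e_spec hKclosed hKconv hKcone hKpointed hvnorm hv hr hrK z
  obtain ⟨h2, _⟩ := st17_e_spec hKclosed hKconv hKcone hKpointed hvnorm hv hr hrK z'
  obtain ⟨_, hmin⟩ := st17_e_spec hKclosed hKconv hKcone hKpointed hvnorm hv hr hrK (z + z')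
  apply hmin
  have := st17_add_mem hKconv hKcone h1 h2
  have heq : (st17e K v z • v - z) + (st17e K v z' • v - z') =
      (st17e K v z + st17e K v z') • v - (z + z') := by
    rw [add_smul]; abel
  rwa [heq] at this

lemma st17_e_shift (z : (EuclideanSpace ℝ (Fin m))) (a : ℝ) : st17e K v (z + a • v) = st17e K v z + a := by
  obtain ⟨h1, hmin1⟩ := st17_e_spec hKclosed hKconv hKcone hKpointed hvnorm hv hr hrK z
  obtain ⟨h2, hmin2⟩ := st17_e_spec hKclosed hKconv hKcone hKpointed hvnorm hv hr hrK (z + a • v)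
  have hle1 : st17e K v (z + a • v) ≤ st17e K v z + a := by
    apply hmin2
    have heq : (st17e K v z + a) • v - (z + a • v) = st17e K v z • v - z := by
      rw [add_smul]; abel
    rwa [heq]
  have hle2 : st17e K v z ≤ st17e K v (z + a • v) - a := by
    apply hmin1
    have heq : (st17e K v (z + a • v) - a) • v - z = st17e K v (z + a • v) • v - (z + a • v) := by
      rw [sub_smul]; abel
    rwa [heq]
  linarith

lemma st17_e_zero : st17e K v 0 = 0 := by
  obtain ⟨h1, hmin⟩ := st17_e_spec hKclosed hKconv hKcone hKpointed hvnorm hv hr hrK 0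
  have hle : st17e K v 0 ≤ 0 := by
    apply hmin; simpa using st17_zero_mem hKcone hv
  have : st17e K v 0 • v - 0 ∈ K := h1
  rw [sub_zero] at this
  have := (st17_vmem_iff hKcone hKpointed hvnorm hv _).mp this
  linarith

lemma st17_delta_nonneg (z : (EuclideanSpace ℝ (Fin m))) : 0 ≤ st17e K v z + st17e K v (-z) := by
  have h := st17_e_add hKclosed hKconv hKcone hKpointed hvnorm hv hr hrK z (-z)
  rw [add_neg_cancel, st17_e_zero hKclosed hKconv hKcone hKpointed hvnorm hv hr hrK] at h
  linarith

lemma st17_delta_eq_zero (z : (EuclideanSpace ℝ (Fin m))) (h : st17e K v z + st17e K v (-z) = 0) :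
    z = (st17e K v z) • v := by
  obtain ⟨h1, _⟩ := st17_e_spec hKclosed hKconv hKcone hKpointed hvnorm hv hr hrK z
  obtain ⟨h2, _⟩ := st17_e_spec hKclosed hKconv hKcone hKpointed hvnorm hv hr hrK (-z)
  have hB : -(st17e K v z • v - z) ∈ K := by
    have heq : -(st17e K v z • v - z) = st17e K v (-z) • v - (-z) := by
      have ha : st17e K v (-z) = -st17e K v z := by linarith
      rw [ha, neg_smul]; abel
    rw [heq]; exact h2
  have := hKpointed _ h1 hB
  have := sub_eq_zero.mp this
  rw [this]

omit hKconv hvnorm hv hr hrK in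
lemma st17_Cv : ∃ C : ℝ, 0 < C ∧ ∀ (w : EuclideanSpace ℝ (Fin m)) (t : ℝ), 0 ≤ t →
    t • v - w ∈ K → t • v + w ∈ K → ‖w‖ ≤ C * t := by
  set T : Set (EuclideanSpace ℝ (Fin m)) := {w | v - w ∈ K ∧ v + w ∈ K} with hT
  have hTbdd : Bornology.IsBounded T := by
    by_contra hb
    rw [isBounded_iff_forall_norm_le] at hb
    push_neg at hb
    choose w hwT hwn using fun k : ℕ => hb k
    have hwpos : ∀ k : ℕ, 0 < ‖w (k + 1)‖ := fun k =>
      lt_of_le_of_lt (by positivity) (hwn (k + 1))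
    set u : ℕ → EuclideanSpace ℝ (Fin m) := fun k => ‖w (k + 1)‖⁻¹ • w (k + 1) with hu
    have hun : ∀ k, u k ∈ Metric.sphere (0 : EuclideanSpace ℝ (Fin m)) 1 := by
      intro k
      rw [Metric.mem_sphere, dist_zero_right, norm_smul, Real.norm_eq_abs,
        abs_of_nonneg (inv_nonneg.mpr (hwpos k).le), inv_mul_cancel₀ (ne_of_gt (hwpos k))]
    obtain ⟨a, ha, φ, hφ, hconv⟩ :=
      (isCompact_sphere (0 : EuclideanSpace ℝ (Fin m)) 1).tendsto_subseq hun
    have hc0 : Tendsto (fun k => ‖w (φ k + 1)‖⁻¹) atTop (𝓝 0) := by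
      apply squeeze_zero (fun k => inv_nonneg.mpr (hwpos (φ k)).le)
        (g := fun k : ℕ => ((k : ℝ) + 1)⁻¹)
      · intro k
        apply inv_anti₀ (by positivity)
        calc ((k : ℝ) + 1) ≤ (φ k : ℝ) + 1 := by
              have : k ≤ φ k := hφ.le_apply
              have : (k : ℝ) ≤ (φ k : ℝ) := by exact_mod_cast this
              linarith
        _ ≤ ‖w (φ k + 1)‖ := by
              have := hwn (φ k + 1); push_cast at this ⊢; linarith
      · exact tendsto_one_div_add_atTop_nhds_zero_nat.congr (by intro k; rw [one_div])
    have hvk : Tendsto (fun k => ‖w (φ k + 1)‖⁻¹ • v) atTop (𝓝 0) := by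
      have := hc0.smul_const v
      rwa [zero_smul] at this
    have hmem1 : ∀ k, ‖w (k + 1)‖⁻¹ • v - u k ∈ K := by
      intro k
      have h1 := (hwT (k + 1)).1
      have := hKcone _ (inv_nonneg.mpr (hwpos k).le) _ h1
      rwa [smul_sub] at this
    have hmem2 : ∀ k, ‖w (k + 1)‖⁻¹ • v + u k ∈ K := by
      intro k
      have h1 := (hwT (k + 1)).2
      have := hKcone _ (inv_nonneg.mpr (hwpos k).le) _ h1
      rwa [smul_add] at this
    have hna : -a ∈ K := by
      have htd : Tendsto (fun k => ‖w (φ k + 1)‖⁻¹ • v - u (φ k)) atTop (𝓝 (-a)) := by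
        have := hvk.sub hconv
        rwa [zero_sub] at this
      exact hKclosed.mem_of_tendsto htd (Eventually.of_forall fun k => hmem1 (φ k))
    have hpa : a ∈ K := by
      have htd : Tendsto (fun k => ‖w (φ k + 1)‖⁻¹ • v + u (φ k)) atTop (𝓝 a) := by
        have := hvk.add hconv
        rwa [zero_add] at this
      exact hKclosed.mem_of_tendsto htd (Eventually.of_forall fun k => hmem2 (φ k))
    have := hKpointed a hpa hna
    rw [this] at ha
    simp at ha
  obtain ⟨C0, hC0⟩ := isBounded_iff_forall_norm_le.mp hTbdd
  refine ⟨max C0 1, lt_of_lt_of_le one_pos (le_max_right _ _), ?_⟩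
  intro w t ht h1 h2
  rcases eq_or_lt_of_le ht with ht0 | ht0
  · rw [← ht0] at h1 h2 ⊢
    rw [zero_smul, zero_sub] at h1
    rw [zero_smul, zero_add] at h2
    have := hKpointed w h2 h1
    rw [this]
    simp
  · have hmem : t⁻¹ • w ∈ T := by
      constructor
      · have := hKcone t⁻¹ (inv_nonneg.mpr ht) _ h1
        rwa [smul_sub, smul_smul, inv_mul_cancel₀ (ne_of_gt ht0), one_smul] at this
      · have := hKcone t⁻¹ (inv_nonneg.mpr ht) _ h2
        rwa [smul_add, smul_smul, inv_mul_cancel₀ (ne_of_gt ht0), one_smul] at this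
    have hle := hC0 _ hmem
    rw [norm_smul, Real.norm_eq_abs, abs_of_nonneg (inv_nonneg.mpr ht)] at hle
    have : ‖w‖ ≤ C0 * t := by
      rw [inv_mul_le_iff₀ ht0] at hle
      linarith [hle]
    calc ‖w‖ ≤ C0 * t := this
    _ ≤ max C0 1 * t := by
        apply mul_le_mul_of_nonneg_right (le_max_left _ _) ht

noncomputable def st17P {m : ℕ} (v z : EuclideanSpace ℝ (Fin m)) : EuclideanSpace ℝ (Fin m) :=
  z - (inner ℝ v z : ℝ) • v

omit hKclosed hKconv hKcone hKpointed hv hr hrK in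
lemma st17_P_shift (z : EuclideanSpace ℝ (Fin m)) (a : ℝ) :
    st17P v (z + a • v) = st17P v z := by
  unfold st17P
  rw [inner_add_right, real_inner_smul_right, real_inner_self_eq_norm_mul_norm, hvnorm]
  rw [add_smul]
  module

omit hKclosed hKconv hKcone hKpointed hvnorm hv hr hrK in
lemma st17_P_neg (z : EuclideanSpace ℝ (Fin m)) : st17P v (-z) = -st17P v z := by
  unfold st17P
  rw [inner_neg_right]
  module

omit hKclosed hKconv hKcone hKpointed hv hr hrK in
lemma st17_P_norm_le (z : EuclideanSpace ℝ (Fin m)) : ‖st17P v z‖ ≤ 2 * ‖z‖ := by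
  unfold st17P
  calc ‖z - (inner ℝ v z : ℝ) • v‖ ≤ ‖z‖ + ‖(inner ℝ v z : ℝ) • v‖ := norm_sub_le _ _
  _ ≤ 2 * ‖z‖ := by
      rw [norm_smul, Real.norm_eq_abs, hvnorm, mul_one]
      have := abs_real_inner_le_norm v z
      rw [hvnorm, one_mul] at this
      linarith

omit hKclosed hKconv hKcone hKpointed hv hr hrK in
lemma st17_P_decomp (z : EuclideanSpace ℝ (Fin m)) : z = st17P v z + (inner ℝ v z : ℝ) • v := by
  unfold st17P; abel

omit hv hr hrK in
lemma st17_normP_le_delta {C : ℝ}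
    (hC : ∀ (w : EuclideanSpace ℝ (Fin m)) (t : ℝ), 0 ≤ t →
      t • v - w ∈ K → t • v + w ∈ K → ‖w‖ ≤ C * t)
    (hdnn : 0 ≤ st17e K v z + st17e K v (-z))
    (h1 : (st17e K v z) • v - z ∈ K) (h2 : (st17e K v (-z)) • v - (-z) ∈ K) :
    ‖st17P v z‖ ≤ C * (st17e K v z + st17e K v (-z)) := by
  set a := st17e K v z
  set b := st17e K v (-z)
  set u := z - ((a - b) / 2) • v with hu
  have key1 : ((a + b) / 2) • v - u = a • v - z := by
    rw [hu]; rw [show (a+b)/2 = a - (a-b)/2 by ring]; module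
  have key2 : ((a + b) / 2) • v + u = b • v - (-z) := by
    rw [hu]; rw [show (a+b)/2 = b + (a-b)/2 by ring]; module
  have hun : ‖u‖ ≤ C * ((a + b) / 2) := by
    apply hC u ((a + b) / 2) (by linarith)
    · rw [key1]; exact h1
    · rw [key2]; exact h2
  have hPz : st17P v z = st17P v u := by
    have : z = u + ((a - b) / 2) • v := by rw [hu]; abel
    rw [this, st17_P_shift hvnorm]
  rw [hPz]
  calc ‖st17P v u‖ ≤ 2 * ‖u‖ := st17_P_norm_le hvnorm u
  _ ≤ 2 * (C * ((a + b) / 2)) := by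
      apply mul_le_mul_of_nonneg_left hun (by norm_num)
  _ = C * (a + b) := by ring

lemma st17_delta_le_normP (z : EuclideanSpace ℝ (Fin m)) :
    st17e K v z + st17e K v (-z) ≤ 2 * ‖st17P v z‖ / r := by
  have hz := st17_P_decomp hvnorm z
  have h1 : st17e K v z = st17e K v (st17P v z) + (inner ℝ v z : ℝ) := by
    conv_lhs => rw [hz]
    exact st17_e_shift hKclosed hKconv hKcone hKpointed hvnorm hv hr hrK _ _
  have hz2 : -z = -st17P v z + (-(inner ℝ v z : ℝ)) • v := by
    rw [neg_smul]
    rw [show -st17P v z + -((inner ℝ v z : ℝ) • v) = -(st17P v z + (inner ℝ v z : ℝ) • v) by abel]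
    rw [← hz]
  have h2 : st17e K v (-z) = st17e K v (-st17P v z) - (inner ℝ v z : ℝ) := by
    conv_lhs => rw [hz2]
    rw [st17_e_shift hKclosed hKconv hKcone hKpointed hvnorm hv hr hrK _ _]
    ring
  have h3 := st17_e_le_norm hKclosed hKconv hKcone hKpointed hvnorm hv hr hrK (st17P v z)
  have h4 := st17_e_le_norm hKclosed hKconv hKcone hKpointed hvnorm hv hr hrK (-st17P v z)
  rw [norm_neg] at h4
  rw [h1, h2]
  have : 2 * ‖st17P v z‖ / r = ‖st17P v z‖ / r + ‖st17P v z‖ / r := by ring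
  rw [this]
  linarith

end st17cone



section st17flow

variable {n m : ℕ}
    (Γ : EuclideanSpace ℝ (Fin m) →ₗ[ℝ] EuclideanSpace ℝ (Fin n))
    (R : EuclideanSpace ℝ (Fin n) → EuclideanSpace ℝ (Fin m))
    (σ : EuclideanSpace ℝ (Fin n))
    (ψ : ℝ → EuclideanSpace ℝ (Fin m) → EuclideanSpace ℝ (Fin m))

variable
    (hR : ∀ S₀ : EuclideanSpace ℝ (Fin n), (∀ i, 0 ≤ S₀ i) →
      ∃ L : NNReal, ∃ U ∈ nhdsWithin S₀ {S : EuclideanSpace ℝ (Fin n) | ∀ i, 0 ≤ S i},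
        LipschitzOnWith L R U)
    (hψ0 : ∀ x, (∀ i, 0 ≤ (σ + Γ x) i) → ψ 0 x = x)
    (hψX : ∀ x, (∀ i, 0 ≤ (σ + Γ x) i) → ∀ t : ℝ, 0 ≤ t → ∀ i, 0 ≤ (σ + Γ (ψ t x)) i)
    (hψode : ∀ x, (∀ i, 0 ≤ (σ + Γ x) i) → ∀ t : ℝ, 0 ≤ t →
      HasDerivWithinAt (fun s => ψ s x) (R (σ + Γ (ψ t x))) (Set.Ici 0) t)

include hR in
lemma st17_hFext : ∀ y ∈ {x : EuclideanSpace ℝ (Fin m) | ∀ i, 0 ≤ (σ + Γ x) i},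
    ∃ L : NNReal, ∃ U ∈ 𝓝[{x : EuclideanSpace ℝ (Fin m) | ∀ i, 0 ≤ (σ + Γ x) i}] y,
      LipschitzOnWith L (fun x => R (σ + Γ x)) U := by
  intro x₀ hx₀
  obtain ⟨L, U, hU, hLip⟩ := hR (σ + Γ x₀) hx₀
  have hΓc : Continuous (⇑Γ) := Γ.continuous_of_finiteDimensional
  set A : EuclideanSpace ℝ (Fin m) → EuclideanSpace ℝ (Fin n) := fun x => σ + Γ x with hA
  have hAcont : Continuous A := continuous_const.add hΓc
  have hmaps : MapsTo A {x : EuclideanSpace ℝ (Fin m) | ∀ i, 0 ≤ (σ + Γ x) i}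
      {S : EuclideanSpace ℝ (Fin n) | ∀ i, 0 ≤ S i} := fun x hx => hx
  have hU' : A ⁻¹' U ∈ 𝓝[{x : EuclideanSpace ℝ (Fin m) | ∀ i, 0 ≤ (σ + Γ x) i}] x₀ := by
    have ht := (hAcont.continuousWithinAt (s := {x : EuclideanSpace ℝ (Fin m) | ∀ i, 0 ≤ (σ + Γ x) i})
      (x := x₀)).tendsto_nhdsWithin hmaps
    exact ht hU
  have hΓlip : LipschitzWith ‖Γ.toContinuousLinearMap‖₊ (⇑Γ) := by
    have := Γ.toContinuousLinearMap.lipschitz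
    rwa [LinearMap.coe_toContinuousLinearMap'] at this
  have hAlip : LipschitzWith ‖Γ.toContinuousLinearMap‖₊ A := by
    intro x y
    have := hΓlip x y
    simpa [hA, edist_eq_enorm_sub] using this
  refine ⟨L * ‖Γ.toContinuousLinearMap‖₊, A ⁻¹' U, hU', ?_⟩
  have := hLip.comp (hAlip.lipschitzOnWith (s := A ⁻¹' U)) (mapsTo_preimage A U)
  exact this

include hR in
lemma st17_hFchem : ∀ y ∈ {S : EuclideanSpace ℝ (Fin n) | ∀ i, 0 ≤ S i},
    ∃ L : NNReal, ∃ U ∈ 𝓝[{S : EuclideanSpace ℝ (Fin n) | ∀ i, 0 ≤ S i}] y,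
      LipschitzOnWith L (fun S => Γ (R S)) U := by
  intro S₀ hS₀
  obtain ⟨L, U, hU, hLip⟩ := hR S₀ hS₀
  have hΓlip : LipschitzWith ‖Γ.toContinuousLinearMap‖₊ (⇑Γ) := by
    have := Γ.toContinuousLinearMap.lipschitz
    rwa [LinearMap.coe_toContinuousLinearMap'] at this
  exact ⟨‖Γ.toContinuousLinearMap‖₊ * L, U, hU, hΓlip.comp_lipschitzOnWith hLip⟩

variable (v : EuclideanSpace ℝ (Fin m))

include hR hψ0 hψX hψode in
lemma st17_trans (hΓv : Γ v = 0)
    {x : EuclideanSpace ℝ (Fin m)} (hx : ∀ i, 0 ≤ (σ + Γ x) i) (c : ℝ) :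
    ∀ t : ℝ, 0 ≤ t → ψ t (x + c • v) = ψ t x + c • v := by
  have hadd : ∀ y : EuclideanSpace ℝ (Fin m), Γ (y + c • v) = Γ y := by
    intro y
    rw [map_add, map_smul, hΓv, smul_zero, add_zero]
  have hx' : ∀ i, 0 ≤ (σ + Γ (x + c • v)) i := by rw [hadd]; exact hx
  apply stmt17_uniq (F := fun z => R (σ + Γ z))
    (Ω := {z : EuclideanSpace ℝ (Fin m) | ∀ i, 0 ≤ (σ + Γ z) i})
    (st17_hFext Γ R σ hR)
  · intro t ht
    exact ⟨hψX _ hx' t ht, hψode _ hx' t ht⟩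
  · intro t ht
    refine ⟨?_, ?_⟩
    · show ∀ i, 0 ≤ (σ + Γ (ψ t x + c • v)) i
      rw [hadd (ψ t x)]
      exact hψX _ hx t ht
    · have h1 := (hψode _ hx t ht).add_const (c • v)
      rw [hadd (ψ t x)]
      exact h1
  · rw [hψ0 _ hx', hψ0 _ hx]

include hR hψ0 hψX hψode in
lemma st17_semiflow {x : EuclideanSpace ℝ (Fin m)} (hx : ∀ i, 0 ≤ (σ + Γ x) i)
    {s : ℝ} (hs : 0 ≤ s) :
    ∀ t : ℝ, 0 ≤ t → ψ (s + t) x = ψ t (ψ s x) := by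
  have hsx : ∀ i, 0 ≤ (σ + Γ (ψ s x)) i := hψX _ hx s hs
  apply stmt17_uniq (F := fun z => R (σ + Γ z))
    (Ω := {z : EuclideanSpace ℝ (Fin m) | ∀ i, 0 ≤ (σ + Γ z) i})
    (st17_hFext Γ R σ hR)
  · intro t ht
    refine ⟨hψX _ hx (s + t) (by linarith), ?_⟩
    have hh : HasDerivWithinAt (fun u : ℝ => s + u) 1 (Ici 0) t :=
      ((hasDerivAt_id t).const_add s).hasDerivWithinAt
    have hmapsTo : MapsTo (fun u : ℝ => s + u) (Ici 0) (Ici 0) := fun u hu => by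
      simp only [mem_Ici] at hu ⊢; linarith
    have := (hψode _ hx (s + t) (by linarith)).scomp t hh hmapsTo
    rw [one_smul] at this
    exact this
  · intro t ht
    exact ⟨hψX _ hsx t ht, hψode _ hsx t ht⟩
  · rw [add_zero, hψ0 _ hsx]

omit hψ0 in
include hψX hψode in
lemma st17_gsol {x₀ : EuclideanSpace ℝ (Fin m)} (hx₀ : ∀ i, 0 ≤ (σ + Γ x₀) i) :
    ∀ t : ℝ, 0 ≤ t → (∀ i, 0 ≤ (σ + Γ (ψ t x₀) + 0) i) ∧
      HasDerivWithinAt (fun s => σ + Γ (ψ s x₀)) (Γ (R (σ + Γ (ψ t x₀)))) (Set.Ici 0) t := by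
  intro t ht
  constructor
  · intro i
    have := hψX _ hx₀ t ht i
    simpa using this
  · have h1 := hψode _ hx₀ t ht
    have h2 := Γ.toContinuousLinearMap.hasFDerivAt.comp_hasDerivWithinAt t h1
    have h3 := h2.const_add σ
    simp only [LinearMap.coe_toContinuousLinearMap'] at h3
    exact h3

include hR hψ0 hψX hψode in
lemma st17_Srep {x₀ : EuclideanSpace ℝ (Fin m)} (hx₀ : ∀ i, 0 ≤ (σ + Γ x₀) i)
    {S : ℝ → EuclideanSpace ℝ (Fin n)} (hS0 : S 0 = σ + Γ x₀)
    (hSsol : ∀ t : ℝ, 0 ≤ t → (∀ i, 0 ≤ S t i) ∧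
      HasDerivWithinAt S (Γ (R (S t))) (Set.Ici 0) t) :
    ∀ t : ℝ, 0 ≤ t → S t = σ + Γ (ψ t x₀) := by
  apply stmt17_uniq (F := fun S => Γ (R S))
    (Ω := {S : EuclideanSpace ℝ (Fin n) | ∀ i, 0 ≤ S i})
    (st17_hFchem Γ R hR)
  · exact hSsol
  · intro t ht
    obtain ⟨h1, h2⟩ := st17_gsol Γ R σ ψ hψX hψode hx₀ t ht
    exact ⟨fun i => by simpa using h1 i, h2⟩
  · rw [hS0, hψ0 _ hx₀]

end st17flow

section st17mono

variable {n m : ℕ}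
    (Γ : EuclideanSpace ℝ (Fin m) →ₗ[ℝ] EuclideanSpace ℝ (Fin n))
    (R : EuclideanSpace ℝ (Fin n) → EuclideanSpace ℝ (Fin m))
    (σ : EuclideanSpace ℝ (Fin n))
    (ψ : ℝ → EuclideanSpace ℝ (Fin m) → EuclideanSpace ℝ (Fin m))
    (K : Set (EuclideanSpace ℝ (Fin m))) (v : EuclideanSpace ℝ (Fin m)) {r : ℝ}

variable
    (hR : ∀ S₀ : EuclideanSpace ℝ (Fin n), (∀ i, 0 ≤ S₀ i) →
      ∃ L : NNReal, ∃ U ∈ nhdsWithin S₀ {S : EuclideanSpace ℝ (Fin n) | ∀ i, 0 ≤ S i},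
        LipschitzOnWith L R U)
    (hψ0 : ∀ x, (∀ i, 0 ≤ (σ + Γ x) i) → ψ 0 x = x)
    (hψX : ∀ x, (∀ i, 0 ≤ (σ + Γ x) i) → ∀ t : ℝ, 0 ≤ t → ∀ i, 0 ≤ (σ + Γ (ψ t x)) i)
    (hψode : ∀ x, (∀ i, 0 ≤ (σ + Γ x) i) → ∀ t : ℝ, 0 ≤ t →
      HasDerivWithinAt (fun s => ψ s x) (R (σ + Γ (ψ t x))) (Set.Ici 0) t)
    (hmono : ∀ x₁, (∀ i, 0 ≤ (σ + Γ x₁) i) → ∀ x₂, (∀ i, 0 ≤ (σ + Γ x₂) i) →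
      ∀ t : ℝ, 0 < t → x₁ - x₂ ∈ K → x₁ ≠ x₂ → ψ t x₁ - ψ t x₂ ∈ interior K)
    (hKclosed : IsClosed K) (hKconv : Convex ℝ K)
    (hKcone : ∀ c : ℝ, 0 ≤ c → ∀ x ∈ K, c • x ∈ K)
    (hKpointed : ∀ x ∈ K, -x ∈ K → x = 0) (hvnorm : ‖v‖ = 1) (hv : v ∈ interior K)
    (hr : 0 < r) (hrK : ∀ u : EuclideanSpace ℝ (Fin m), ‖u‖ ≤ r → v + u ∈ K)
    (hΓv : Γ v = 0)

lemma st17_P_zero : st17P v (0 : EuclideanSpace ℝ (Fin m)) = 0 := by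
  unfold st17P
  rw [inner_zero_right]
  simp

include hR hψ0 hψX hψode hmono hKclosed hKconv hKcone hKpointed hvnorm hv hr hrK hΓv in
lemma st17_nonexp {x y : EuclideanSpace ℝ (Fin m)}
    (hx : ∀ i, 0 ≤ (σ + Γ x) i) (hy : ∀ i, 0 ≤ (σ + Γ y) i) {t : ℝ} (ht : 0 ≤ t)
    (hKmem : (st17e K v (x - y)) • v - (x - y) ∈ K) :
    st17e K v (ψ t x - ψ t y) ≤ st17e K v (x - y) := by
  set c := st17e K v (x - y) with hc
  have hmem' : ∀ i, 0 ≤ (σ + Γ (y + c • v)) i := by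
    have : Γ (y + c • v) = Γ y := by rw [map_add, map_smul, hΓv, smul_zero, add_zero]
    rw [this]; exact hy
  obtain ⟨_, hmin⟩ := st17_e_spec hKclosed hKconv hKcone hKpointed hvnorm hv hr hrK
    (ψ t x - ψ t y)
  by_cases hcase : x = y + c • v
  · have h1 : ψ t x = ψ t y + c • v := by
      rw [hcase]
      exact st17_trans Γ R σ ψ hR hψ0 hψX hψode v hΓv hy c t ht
    have h2 : ψ t x - ψ t y = c • v := by rw [h1]; abel
    have h3 : x - y = c • v := by rw [hcase]; abel
    rw [h2, ← h3]
  · rcases eq_or_lt_of_le ht with ht0 | ht0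
    · rw [← ht0, hψ0 _ hx, hψ0 _ hy]
    · have hKm : (y + c • v) - x ∈ K := by
        have : (y + c • v) - x = c • v - (x - y) := by abel
        rw [this]; exact hKmem
      have hne : y + c • v ≠ x := fun h => hcase h.symm
      have hint := hmono _ hmem' _ hx t ht0 hKm hne
      have htr : ψ t (y + c • v) = ψ t y + c • v :=
        st17_trans Γ R σ ψ hR hψ0 hψX hψode v hΓv hy c t ht
      rw [htr] at hint
      apply hmin
      have : c • v - (ψ t x - ψ t y) = (ψ t y + c • v) - ψ t x := by abel
      rw [this]
      exact interior_subset hint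

include hR hψ0 hψX hψode hmono hKclosed hKconv hKcone hKpointed hvnorm hv hr hrK hΓv in
lemma st17_strict {x y : EuclideanSpace ℝ (Fin m)}
    (hx : ∀ i, 0 ≤ (σ + Γ x) i) (hy : ∀ i, 0 ≤ (σ + Γ y) i) {t : ℝ} (ht : 0 < t)
    (hP : st17P v (x - y) ≠ 0) :
    st17e K v (ψ t x - ψ t y) + st17e K v (-(ψ t x - ψ t y)) <
      st17e K v (x - y) + st17e K v (-(x - y)) := by
  set c := st17e K v (x - y) with hc
  obtain ⟨hKmem, _⟩ := st17_e_spec hKclosed hKconv hKcone hKpointed hvnorm hv hr hrK (x - y)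
  obtain ⟨_, hmin⟩ := st17_e_spec hKclosed hKconv hKcone hKpointed hvnorm hv hr hrK
    (ψ t x - ψ t y)
  have hmem' : ∀ i, 0 ≤ (σ + Γ (y + c • v)) i := by
    have : Γ (y + c • v) = Γ y := by rw [map_add, map_smul, hΓv, smul_zero, add_zero]
    rw [this]; exact hy
  have hne : y + c • v ≠ x := by
    intro h
    apply hP
    have : x - y = c • v := by rw [← h]; abel
    rw [this, show c • v = 0 + c • v by abel, st17_P_shift hvnorm, st17_P_zero]
  have hKm : (y + c • v) - x ∈ K := by
    have : (y + c • v) - x = c • v - (x - y) := by abel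
    rw [this]; exact hKmem
  have hint := hmono _ hmem' _ hx t ht hKm hne
  have htr : ψ t (y + c • v) = ψ t y + c • v :=
    st17_trans Γ R σ ψ hR hψ0 hψX hψode v hΓv hy c t ht.le
  rw [htr] at hint
  obtain ⟨ε, hε, hball⟩ := Metric.isOpen_iff.mp isOpen_interior _ hint
  have hsm : (ψ t y + c • v) - ψ t x - (ε / 2) • v ∈ K := by
    apply interior_subset
    apply hball
    rw [Metric.mem_ball, dist_eq_norm]
    have : (ψ t y + c • v) - ψ t x - (ε / 2) • v - ((ψ t y + c • v) - ψ t x)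
        = -((ε / 2) • v) := by abel
    rw [this, norm_neg, norm_smul, Real.norm_eq_abs, hvnorm, mul_one,
      abs_of_nonneg (by linarith : (0:ℝ) ≤ ε / 2)]
    linarith
  have hle1 : st17e K v (ψ t x - ψ t y) ≤ c - ε / 2 := by
    apply hmin
    have : (c - ε / 2) • v - (ψ t x - ψ t y) = (ψ t y + c • v) - ψ t x - (ε / 2) • v := by
      rw [sub_smul]; abel
    rw [this]
    exact hsm
  have hle2 : st17e K v (-(ψ t x - ψ t y)) ≤ st17e K v (-(x - y)) := by
    have h1 : -(ψ t x - ψ t y) = ψ t y - ψ t x := by abel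
    have h2 : -(x - y) = y - x := by abel
    rw [h1, h2]
    apply st17_nonexp Γ R σ ψ K v hR hψ0 hψX hψode hmono hKclosed hKconv hKcone hKpointed
      hvnorm hv hr hrK hΓv hy hx ht.le
    exact (st17_e_spec hKclosed hKconv hKcone hKpointed hvnorm hv hr hrK (y - x)).1
  linarith

include hΓv in
lemma st17_GammaP (z : EuclideanSpace ℝ (Fin m)) : Γ z = Γ (st17P v z) := by
  unfold st17P
  rw [map_sub, map_smul, hΓv, smul_zero, sub_zero]

include hvnorm in
lemma st17_inner_P (z : EuclideanSpace ℝ (Fin m)) : (inner ℝ v (st17P v z) : ℝ) = 0 := by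
  unfold st17P
  rw [inner_sub_right, real_inner_smul_right, real_inner_self_eq_norm_mul_norm, hvnorm]
  ring

include hvnorm hΓv in
lemma st17_mu (hker : LinearMap.ker Γ = Submodule.span ℝ {v}) :
    ∃ μ : ℝ, 0 < μ ∧ ∀ z : EuclideanSpace ℝ (Fin m), μ * ‖st17P v z‖ ≤ ‖Γ z‖ := by
  by_cases hQ : ∃ w : EuclideanSpace ℝ (Fin m), (inner ℝ v w : ℝ) = 0 ∧ ‖w‖ = 1
  · set Q : Set (EuclideanSpace ℝ (Fin m)) :=
      {w | (inner ℝ v w : ℝ) = 0} ∩ Metric.sphere 0 1 with hQdef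
    have hQclosed : IsClosed Q :=
      (isClosed_eq (Continuous.inner continuous_const continuous_id) continuous_const).inter
        Metric.isClosed_sphere
    have hQc : IsCompact Q :=
      (isCompact_sphere (0 : EuclideanSpace ℝ (Fin m)) 1).of_isClosed_subset hQclosed
        inter_subset_right
    obtain ⟨w1, hw1⟩ := hQ
    have hQne : Q.Nonempty := ⟨w1, hw1.1, mem_sphere_zero_iff_norm.mpr hw1.2⟩
    have hΓcont : Continuous (fun w : EuclideanSpace ℝ (Fin m) => ‖Γ w‖) :=
      continuous_norm.comp Γ.continuous_of_finiteDimensional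
    obtain ⟨w0, hw0Q, hminOn⟩ := hQc.exists_isMinOn hQne hΓcont.continuousOn
    have hμpos : 0 < ‖Γ w0‖ := by
      rcases (norm_nonneg (Γ w0)).eq_or_lt with h | h
      · exfalso
        have hΓw0 : Γ w0 = 0 := by rwa [eq_comm, norm_eq_zero] at h
        have : w0 ∈ LinearMap.ker Γ := hΓw0
        rw [hker, Submodule.mem_span_singleton] at this
        obtain ⟨a, ha⟩ := this
        have hinner : (inner ℝ v w0 : ℝ) = a := by
          rw [← ha, real_inner_smul_right, real_inner_self_eq_norm_mul_norm, hvnorm]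
          ring
        have h0 : a = 0 := by rw [← hinner]; exact hw0Q.1
        have : w0 = 0 := by rw [← ha, h0, zero_smul]
        have hn := mem_sphere_zero_iff_norm.mp hw0Q.2
        rw [this] at hn
        simp at hn
      · exact h
    refine ⟨‖Γ w0‖, hμpos, ?_⟩
    intro z
    rcases eq_or_ne (st17P v z) 0 with hPz | hPz
    · rw [hPz, norm_zero, mul_zero]
      exact norm_nonneg _
    · have hPzn : 0 < ‖st17P v z‖ := norm_pos_iff.mpr hPz
      set u := ‖st17P v z‖⁻¹ • st17P v z with hu
      have huQ : u ∈ Q := by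
        constructor
        · show (inner ℝ v u : ℝ) = 0
          rw [hu, real_inner_smul_right, st17_inner_P v hvnorm z, mul_zero]
        · apply mem_sphere_zero_iff_norm.mpr
          rw [hu, norm_smul, Real.norm_eq_abs, abs_of_nonneg (inv_nonneg.mpr hPzn.le),
            inv_mul_cancel₀ (ne_of_gt hPzn)]
      have hmin := isMinOn_iff.mp hminOn u huQ
      have hΓu : ‖Γ u‖ = ‖st17P v z‖⁻¹ * ‖Γ z‖ := by
        rw [hu, map_smul, norm_smul, Real.norm_eq_abs, abs_of_nonneg (inv_nonneg.mpr hPzn.le),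
          ← st17_GammaP Γ v hΓv z]
      rw [hΓu, inv_mul_eq_div, le_div_iff₀ hPzn] at hmin
      linarith
  · push_neg at hQ
    refine ⟨1, one_pos, ?_⟩
    intro z
    rcases eq_or_ne (st17P v z) 0 with hPz | hPz
    · rw [hPz, norm_zero, mul_zero]; exact norm_nonneg _
    · exfalso
      have hPzn : 0 < ‖st17P v z‖ := norm_pos_iff.mpr hPz
      apply hQ (‖st17P v z‖⁻¹ • st17P v z)
      · rw [real_inner_smul_right, st17_inner_P v hvnorm z, mul_zero]
      · rw [norm_smul, Real.norm_eq_abs, abs_of_nonneg (inv_nonneg.mpr hPzn.le),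
          inv_mul_cancel₀ (ne_of_gt hPzn)]

include hΓv in
lemma st17_Gamma_le (z : EuclideanSpace ℝ (Fin m)) :
    ‖Γ z‖ ≤ ‖Γ.toContinuousLinearMap‖ * ‖st17P v z‖ := by
  rw [st17_GammaP Γ v hΓv z]
  have := Γ.toContinuousLinearMap.le_opNorm (st17P v z)
  rwa [LinearMap.coe_toContinuousLinearMap'] at this

end st17mono

section st17core

variable {n m : ℕ}
    (Γ : EuclideanSpace ℝ (Fin m) →ₗ[ℝ] EuclideanSpace ℝ (Fin n))
    (R : EuclideanSpace ℝ (Fin n) → EuclideanSpace ℝ (Fin m))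
    (σ : EuclideanSpace ℝ (Fin n))
    (ψ : ℝ → EuclideanSpace ℝ (Fin m) → EuclideanSpace ℝ (Fin m))
    (K : Set (EuclideanSpace ℝ (Fin m))) (v : EuclideanSpace ℝ (Fin m)) {r : ℝ}

variable
    (hR : ∀ S₀ : EuclideanSpace ℝ (Fin n), (∀ i, 0 ≤ S₀ i) →
      ∃ L : NNReal, ∃ U ∈ nhdsWithin S₀ {S : EuclideanSpace ℝ (Fin n) | ∀ i, 0 ≤ S i},
        LipschitzOnWith L R U)
    (hψ0 : ∀ x, (∀ i, 0 ≤ (σ + Γ x) i) → ψ 0 x = x)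
    (hψX : ∀ x, (∀ i, 0 ≤ (σ + Γ x) i) → ∀ t : ℝ, 0 ≤ t → ∀ i, 0 ≤ (σ + Γ (ψ t x)) i)
    (hψode : ∀ x, (∀ i, 0 ≤ (σ + Γ x) i) → ∀ t : ℝ, 0 ≤ t →
      HasDerivWithinAt (fun s => ψ s x) (R (σ + Γ (ψ t x))) (Set.Ici 0) t)
    (hmono : ∀ x₁, (∀ i, 0 ≤ (σ + Γ x₁) i) → ∀ x₂, (∀ i, 0 ≤ (σ + Γ x₂) i) →
      ∀ t : ℝ, 0 < t → x₁ - x₂ ∈ K → x₁ ≠ x₂ → ψ t x₁ - ψ t x₂ ∈ interior K)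
    (hKclosed : IsClosed K) (hKconv : Convex ℝ K)
    (hKcone : ∀ c : ℝ, 0 ≤ c → ∀ x ∈ K, c • x ∈ K)
    (hKpointed : ∀ x ∈ K, -x ∈ K → x = 0) (hvnorm : ‖v‖ = 1) (hv : v ∈ interior K)
    (hr : 0 < r) (hrK : ∀ u : EuclideanSpace ℝ (Fin m), ‖u‖ ≤ r → v + u ∈ K)
    (hΓv : Γ v = 0)
    (hker : LinearMap.ker Γ = Submodule.span ℝ {v})
    (hbdd : ∀ S : ℝ → EuclideanSpace ℝ (Fin n), (∀ i, 0 ≤ S 0 i) →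
      (∀ t : ℝ, 0 ≤ t → (∀ i, 0 ≤ S t i) ∧
        HasDerivWithinAt S (Γ (R (S t))) (Set.Ici 0) t) →
      ∃ M : ℝ, ∀ t : ℝ, 0 ≤ t → ‖S t‖ ≤ M)

include hR hψ0 hψX hψode hmono hKclosed hKconv hKcone hKpointed hvnorm hv hr hrK hΓv hker hbdd in
lemma st17_core {x₀ : EuclideanSpace ℝ (Fin m)} (hx₀ : ∀ i, 0 ≤ (σ + Γ x₀) i) :
    ∃ xs : EuclideanSpace ℝ (Fin m), (∀ i, 0 ≤ (σ + Γ xs) i) ∧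
      (∀ τ : ℝ, 0 ≤ τ → Γ (ψ τ xs) = Γ xs) ∧
      Tendsto (fun t => Γ (ψ t x₀)) atTop (𝓝 (Γ xs)) := by
  obtain ⟨Cv, hCv, hCvP⟩ := st17_Cv hKclosed hKcone hKpointed (v := v)
  obtain ⟨μ, hμ, hμP⟩ := st17_mu Γ v hvnorm hΓv hker
  classical
  set δf : EuclideanSpace ℝ (Fin m) → ℝ := fun z => st17e K v z + st17e K v (-z) with hδf
  have espec : ∀ z : EuclideanSpace ℝ (Fin m),
      (st17e K v z) • v - z ∈ K ∧ (∀ c : ℝ, c • v - z ∈ K → st17e K v z ≤ c) :=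
    fun z => st17_e_spec hKclosed hKconv hKcone hKpointed hvnorm hv hr hrK z
  have eadd : ∀ z z' : EuclideanSpace ℝ (Fin m),
      st17e K v (z + z') ≤ st17e K v z + st17e K v z' :=
    fun z z' => st17_e_add hKclosed hKconv hKcone hKpointed hvnorm hv hr hrK z z'
  have dnn : ∀ z, 0 ≤ δf z :=
    fun z => st17_delta_nonneg hKclosed hKconv hKcone hKpointed hvnorm hv hr hrK z
  have hδ_neg : ∀ z, δf (-z) = δf z := by
    intro z; simp only [hδf, neg_neg]; ring
  have hδ_add : ∀ p q, δf (p + q) ≤ δf p + δf q := by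
    intro p q
    have h1 := eadd p q
    have h2 := eadd (-p) (-q)
    rw [show -p + -q = -(p+q) by abel] at h2
    simp only [hδf]
    linarith
  have hδ_tri : ∀ z z', δf z ≤ δf z' + δf (z - z') := by
    intro z z'
    have := hδ_add z' (z - z')
    rw [show z' + (z - z') = z by abel] at this
    linarith
  have hδ_shift : ∀ (z : EuclideanSpace ℝ (Fin m)) (a : ℝ), δf (z + a • v) = δf z := by
    intro z a
    have h1 := st17_e_shift hKclosed hKconv hKcone hKpointed hvnorm hv hr hrK z a
    have h2 := st17_e_shift hKclosed hKconv hKcone hKpointed hvnorm hv hr hrK (-z) (-a)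
    simp only [hδf]
    rw [h1, show -(z + a • v) = -z + (-a) • v by rw [neg_smul]; abel, h2]
    ring
  have hδ_spanv : ∀ (z : EuclideanSpace ℝ (Fin m)), Γ z = 0 → δf z = 0 := by
    intro z hz
    have : z ∈ LinearMap.ker Γ := hz
    rw [hker, Submodule.mem_span_singleton] at this
    obtain ⟨a, ha⟩ := this
    have : δf z = δf 0 := by
      rw [← ha, show a • v = 0 + a • v by abel, hδ_shift]
    rw [this]
    simp only [hδf]
    rw [neg_zero, st17_e_zero hKclosed hKconv hKcone hKpointed hvnorm hv hr hrK]
    ring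
  have hδ_le_Γ : ∀ z, δf z ≤ 2 / (r * μ) * ‖Γ z‖ := by
    intro z
    have h1 := st17_delta_le_normP hKclosed hKconv hKcone hKpointed hvnorm hv hr hrK (z := z)
    have h2 := hμP z
    have h3 : ‖st17P v z‖ ≤ ‖Γ z‖ / μ := by
      rw [le_div_iff₀ hμ]; linarith
    have h4 : (2:ℝ) * ‖st17P v z‖ / r ≤ 2 * (‖Γ z‖ / μ) / r := by gcongr
    have h5 : (2:ℝ) * (‖Γ z‖ / μ) / r = 2 / (r * μ) * ‖Γ z‖ := by
      rw [div_mul_eq_mul_div, mul_div_assoc, div_div, mul_comm μ r, mul_div_assoc]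
    simp only [hδf] at h1 ⊢
    linarith
  have hΓ_le_δ : ∀ z, ‖Γ z‖ ≤ ‖Γ.toContinuousLinearMap‖ * Cv * δf z := by
    intro z
    have h1 := st17_Gamma_le Γ v hΓv z
    have h2 : ‖st17P v z‖ ≤ Cv * δf z := by
      have := st17_normP_le_delta hKclosed hKconv hKcone hKpointed hvnorm hCvP (dnn z)
        (espec z).1 (espec (-z)).1
      simpa only [hδf] using this
    calc ‖Γ z‖ ≤ ‖Γ.toContinuousLinearMap‖ * ‖st17P v z‖ := h1
    _ ≤ ‖Γ.toContinuousLinearMap‖ * (Cv * δf z) := by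
        apply mul_le_mul_of_nonneg_left h2 (norm_nonneg _)
    _ = ‖Γ.toContinuousLinearMap‖ * Cv * δf z := by ring
  have hnonexp : ∀ (x y : EuclideanSpace ℝ (Fin m)), (∀ i, 0 ≤ (σ + Γ x) i) →
      (∀ i, 0 ≤ (σ + Γ y) i) → ∀ t : ℝ, 0 ≤ t → δf (ψ t x - ψ t y) ≤ δf (x - y) := by
    intro x y hx hy t ht
    have h1 : st17e K v (ψ t x - ψ t y) ≤ st17e K v (x - y) :=
      st17_nonexp Γ R σ ψ K v hR hψ0 hψX hψode hmono hKclosed hKconv hKcone hKpointed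
        hvnorm hv hr hrK hΓv hx hy ht (espec (x - y)).1
    have h2 : st17e K v (ψ t y - ψ t x) ≤ st17e K v (y - x) :=
      st17_nonexp Γ R σ ψ K v hR hψ0 hψX hψode hmono hKclosed hKconv hKcone hKpointed
        hvnorm hv hr hrK hΓv hy hx ht (espec (y - x)).1
    simp only [hδf]
    rw [show -(ψ t x - ψ t y) = ψ t y - ψ t x by abel, show -(x - y) = y - x by abel]
    linarith
  -- boundedness of the Γ-image of the orbit
  have horthant : ∀ (x : EuclideanSpace ℝ (Fin m)), (∀ i, 0 ≤ (σ + Γ x) i) →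
      ∃ M : ℝ, ∀ t : ℝ, 0 ≤ t → ‖Γ (ψ t x)‖ ≤ M := by
    intro x hx
    have hc1 : ∀ i, 0 ≤ (σ + Γ (ψ (0:ℝ) x)) i := by
      rw [hψ0 _ hx]; exact hx
    have hc2 : ∀ t : ℝ, 0 ≤ t → (∀ i, 0 ≤ (σ + Γ (ψ t x)) i) ∧
        HasDerivWithinAt (fun s => σ + Γ (ψ s x)) (Γ (R (σ + Γ (ψ t x)))) (Set.Ici 0) t := by
      intro t ht
      obtain ⟨h1, h2⟩ := st17_gsol Γ R σ ψ hψX hψode hx t ht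
      exact ⟨fun i => by simpa using h1 i, h2⟩
    obtain ⟨M, hM⟩ := hbdd (fun s => σ + Γ (ψ s x)) hc1 hc2
    refine ⟨M + ‖σ‖, fun t ht => ?_⟩
    have h1 := hM t ht
    calc ‖Γ (ψ t x)‖ = ‖(σ + Γ (ψ t x)) - σ‖ := by rw [add_sub_cancel_left]
    _ ≤ ‖σ + Γ (ψ t x)‖ + ‖σ‖ := norm_sub_le _ _
    _ ≤ M + ‖σ‖ := by linarith
  obtain ⟨M, hM⟩ := horthant x₀ hx₀
  have hMnn : 0 ≤ M := le_trans (norm_nonneg _) (hM 0 le_rfl)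
  -- Bolzano–Weierstrass on the sequence k ↦ Γ (ψ k x₀)
  set y : ℕ → EuclideanSpace ℝ (Fin n) := fun k => Γ (ψ (k : ℝ) x₀) with hy
  have hymem : ∀ k, y k ∈ Metric.closedBall (0 : EuclideanSpace ℝ (Fin n)) M := by
    intro k
    rw [Metric.mem_closedBall, dist_zero_right]
    exact hM _ (Nat.cast_nonneg k)
  obtain ⟨zs, hzsmem, φ, hφ, hconv⟩ :=
    (isCompact_closedBall (0 : EuclideanSpace ℝ (Fin n)) M).tendsto_subseq hymem
  set tk : ℕ → ℝ := fun k => ((φ k : ℕ) : ℝ) with htkdef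
  have htk0 : ∀ k, 0 ≤ tk k := fun k => Nat.cast_nonneg _
  have htkTop : Tendsto tk atTop atTop :=
    tendsto_natCast_atTop_atTop.comp hφ.tendsto_atTop
  have hconv' : Tendsto (fun k => Γ (ψ (tk k) x₀)) atTop (𝓝 zs) := hconv
  -- zs is in the range of Γ
  have hzs_range : zs ∈ LinearMap.range Γ := by
    have hcl : IsClosed ((LinearMap.range Γ : Submodule ℝ (EuclideanSpace ℝ (Fin n))) :
        Set (EuclideanSpace ℝ (Fin n))) := Submodule.closed_of_finiteDimensional _
    exact hcl.mem_of_tendsto hconv' (Eventually.of_forall fun k => ⟨ψ (tk k) x₀, rfl⟩)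
  obtain ⟨xs, hxs⟩ := hzs_range
  -- xs belongs to the state space X
  have hXxs : ∀ i, 0 ≤ (σ + Γ xs) i := by
    intro i
    have htd : Tendsto (fun k => (σ + Γ (ψ (tk k) x₀)) i) atTop (𝓝 ((σ + Γ xs) i)) := by
      have h1 : Tendsto (fun k => σ + Γ (ψ (tk k) x₀)) atTop (𝓝 (σ + Γ xs)) := by
        rw [hxs]
        exact tendsto_const_nhds.add hconv'
      exact ((EuclideanSpace.proj i).continuous.tendsto _).comp h1
    exact ge_of_tendsto' htd fun k => hψX _ hx₀ _ (htk0 k) i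
  -- the quantity δf (ψ t x₀ - xs) tends to 0 along tk
  have hbase : Tendsto (fun k => δf (ψ (tk k) x₀ - xs)) atTop (𝓝 0) := by
    have hb : ∀ k, δf (ψ (tk k) x₀ - xs) ≤ 2 / (r * μ) * ‖Γ (ψ (tk k) x₀) - zs‖ := by
      intro k
      have := hδ_le_Γ (ψ (tk k) x₀ - xs)
      rwa [map_sub, hxs] at this
    have hnorm0 : Tendsto (fun k => ‖Γ (ψ (tk k) x₀) - zs‖) atTop (𝓝 0) :=
      tendsto_iff_norm_sub_tendsto_zero.mp hconv'
    have h2 : Tendsto (fun k => 2 / (r * μ) * ‖Γ (ψ (tk k) x₀) - zs‖) atTop (𝓝 0) := by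
      have := hnorm0.const_mul (2 / (r * μ))
      rwa [mul_zero] at this
    exact squeeze_zero (fun k => dnn _) hb h2
  -- algebraic comparison helper
  have halg : ∀ A C A' C' : EuclideanSpace ℝ (Fin m),
      δf (A - C) ≤ δf (A' - C') + (δf (A - A') + δf (C' - C)) := by
    intro A C A' C'
    have h1 := hδ_tri (A - C) (A' - C')
    have h2 := hδ_add (A - A') (C' - C)
    rw [show (A - A') + (C' - C) = (A - C) - (A' - C') by abel] at h2
    linarith
  -- the limit point is a fixed point of the flow modulo the kernel direction
  have hfix : ∀ τ : ℝ, 0 ≤ τ → Γ (ψ τ xs) = Γ xs := by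
    intro τ hτ
    set abar : ℝ → ℝ := fun t => δf (ψ (max t 0 + τ) x₀ - ψ (max t 0) x₀) with habar
    have hanti : Antitone abar := by
      intro t t' htt'
      simp only [habar]
      have hu0 : 0 ≤ max t 0 := le_max_right _ _
      have hu'0 : 0 ≤ max t' 0 := le_max_right _ _
      have huu' : max t 0 ≤ max t' 0 := max_le_max htt' le_rfl
      set u := max t 0
      set u' := max t' 0
      have hs0 : 0 ≤ u' - u := by linarith
      have h1 : ψ (u' + τ) x₀ = ψ (u' - u) (ψ (u + τ) x₀) := by
        have := st17_semiflow Γ R σ ψ hR hψ0 hψX hψode hx₀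
          (by linarith : (0:ℝ) ≤ u + τ) (u' - u) hs0
        rw [show u + τ + (u' - u) = u' + τ by ring] at this
        exact this
      have h2 : ψ u' x₀ = ψ (u' - u) (ψ u x₀) := by
        have := st17_semiflow Γ R σ ψ hR hψ0 hψX hψode hx₀ hu0 (u' - u) hs0
        rw [show u + (u' - u) = u' by ring] at this
        exact this
      rw [h1, h2]
      exact hnonexp _ _ (hψX _ hx₀ _ (by linarith)) (hψX _ hx₀ _ hu0) _ hs0
    have habdd : BddBelow (Set.range abar) := by
      refine ⟨0, ?_⟩
      rintro _ ⟨t, rfl⟩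
      exact dnn _
    set L := ⨅ t, abar t with hLdef
    have hLtd : Tendsto abar atTop (𝓝 L) := tendsto_atTop_ciInf hanti habdd
    have hkey : ∀ s : ℝ, 0 ≤ s → δf (ψ s (ψ τ xs) - ψ s xs) = L := by
      intro s hs
      have hts : Tendsto (fun k => tk k + s) atTop atTop :=
        tendsto_atTop_add_const_right _ s htkTop
      have hg1 : Tendsto (fun k => abar (tk k + s)) atTop (𝓝 L) := hLtd.comp hts
      have habark : ∀ k, abar (tk k + s) =
          δf (ψ s (ψ τ (ψ (tk k) x₀)) - ψ s (ψ (tk k) x₀)) := by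
        intro k
        have hmax : max (tk k + s) 0 = tk k + s := max_eq_left (by have := htk0 k; linarith)
        simp only [habar, hmax]
        have e1 : ψ (tk k + s + τ) x₀ = ψ (s + τ) (ψ (tk k) x₀) := by
          have := st17_semiflow Γ R σ ψ hR hψ0 hψX hψode hx₀ (htk0 k) (s + τ)
            (by linarith)
          rw [show tk k + (s + τ) = tk k + s + τ by ring] at this
          exact this
        have e2 : ψ (s + τ) (ψ (tk k) x₀) = ψ s (ψ τ (ψ (tk k) x₀)) := by
          have := st17_semiflow Γ R σ ψ hR hψ0 hψX hψode
            (hψX _ hx₀ _ (htk0 k)) hτ s hs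
          rw [show τ + s = s + τ by ring] at this
          exact this
        have e3 : ψ (tk k + s) x₀ = ψ s (ψ (tk k) x₀) :=
          st17_semiflow Γ R σ ψ hR hψ0 hψX hψode hx₀ (htk0 k) s hs
        rw [e1, e2, e3]
      set B := δf (ψ s (ψ τ xs) - ψ s xs) with hBdef
      have hXw : ∀ k, ∀ i, 0 ≤ (σ + Γ (ψ (tk k) x₀)) i := fun k => hψX _ hx₀ _ (htk0 k)
      have hXτw : ∀ k, ∀ i, 0 ≤ (σ + Γ (ψ τ (ψ (tk k) x₀))) i := fun k => hψX _ (hXw k) _ hτ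
      have hXτxs : ∀ i, 0 ≤ (σ + Γ (ψ τ xs)) i := hψX _ hXxs _ hτ
      have hbnd1 : ∀ k, δf (ψ s (ψ τ (ψ (tk k) x₀)) - ψ s (ψ τ xs)) ≤
          δf (ψ (tk k) x₀ - xs) := by
        intro k
        calc δf (ψ s (ψ τ (ψ (tk k) x₀)) - ψ s (ψ τ xs))
            ≤ δf (ψ τ (ψ (tk k) x₀) - ψ τ xs) := hnonexp _ _ (hXτw k) hXτxs _ hs
        _ ≤ δf (ψ (tk k) x₀ - xs) := hnonexp _ _ (hXw k) hXxs _ hτ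
      have hbnd2 : ∀ k, δf (ψ s xs - ψ s (ψ (tk k) x₀)) ≤ δf (ψ (tk k) x₀ - xs) := by
        intro k
        calc δf (ψ s xs - ψ s (ψ (tk k) x₀)) ≤ δf (xs - ψ (tk k) x₀) :=
            hnonexp _ _ hXxs (hXw k) _ hs
        _ = δf (ψ (tk k) x₀ - xs) := by
            rw [show xs - ψ (tk k) x₀ = -(ψ (tk k) x₀ - xs) by abel, hδ_neg]
      have hub : ∀ k, abar (tk k + s) ≤ B + 2 * δf (ψ (tk k) x₀ - xs) := by
        intro k
        rw [habark k]
        have := halg (ψ s (ψ τ (ψ (tk k) x₀))) (ψ s (ψ (tk k) x₀)) (ψ s (ψ τ xs)) (ψ s xs)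
        have hb1 := hbnd1 k
        have hb2 := hbnd2 k
        simp only [hBdef]
        linarith
      have hlb : ∀ k, B - 2 * δf (ψ (tk k) x₀ - xs) ≤ abar (tk k + s) := by
        intro k
        rw [habark k]
        have := halg (ψ s (ψ τ xs)) (ψ s xs) (ψ s (ψ τ (ψ (tk k) x₀))) (ψ s (ψ (tk k) x₀))
        have hb1 : δf (ψ s (ψ τ xs) - ψ s (ψ τ (ψ (tk k) x₀))) ≤ δf (ψ (tk k) x₀ - xs) := by
          rw [show ψ s (ψ τ xs) - ψ s (ψ τ (ψ (tk k) x₀))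
            = -(ψ s (ψ τ (ψ (tk k) x₀)) - ψ s (ψ τ xs)) by abel, hδ_neg]
          exact hbnd1 k
        have hb2 : δf (ψ s (ψ (tk k) x₀) - ψ s xs) ≤ δf (ψ (tk k) x₀ - xs) := by
          rw [show ψ s (ψ (tk k) x₀) - ψ s xs = -(ψ s xs - ψ s (ψ (tk k) x₀)) by abel, hδ_neg]
          exact hbnd2 k
        simp only [hBdef]
        linarith
      have hg2 : Tendsto (fun k => abar (tk k + s)) atTop (𝓝 B) := by
        have hlo : Tendsto (fun k => B - 2 * δf (ψ (tk k) x₀ - xs)) atTop (𝓝 B) := by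
          have := tendsto_const_nhds (x := B) (f := atTop (α := ℕ)) |>.sub
            ((hbase.const_mul 2))
          simpa using this
        have hhi : Tendsto (fun k => B + 2 * δf (ψ (tk k) x₀ - xs)) atTop (𝓝 B) := by
          have := tendsto_const_nhds (x := B) (f := atTop (α := ℕ)) |>.add
            ((hbase.const_mul 2))
          simpa using this
        exact tendsto_of_tendsto_of_tendsto_of_le_of_le hlo hhi hlb hub
      exact tendsto_nhds_unique hg2 hg1
    have h0 : δf (ψ τ xs - xs) = L := by
      have := hkey 0 le_rfl
      rwa [hψ0 _ (hψX _ hXxs _ hτ), hψ0 _ hXxs] at this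
    have hP0 : st17P v (ψ τ xs - xs) = 0 := by
      by_contra hP
      have hstrict := st17_strict Γ R σ ψ K v hR hψ0 hψX hψode hmono hKclosed hKconv hKcone
        hKpointed hvnorm hv hr hrK hΓv (hψX _ hXxs _ hτ) hXxs one_pos hP
      have h1 := hkey 1 zero_le_one
      simp only [hδf] at h1 h0
      linarith
    have hdec := st17_P_decomp hvnorm (ψ τ xs - xs)
    rw [hP0, zero_add] at hdec
    have hΓ0 : Γ (ψ τ xs - xs) = 0 := by
      rw [hdec, map_smul, hΓv, smul_zero]
    rw [map_sub] at hΓ0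
    exact sub_eq_zero.mp hΓ0
  -- convergence of the full orbit
  have hbb : Tendsto (fun t => δf (ψ (max t 0) x₀ - xs)) atTop (𝓝 0) := by
    set bb : ℝ → ℝ := fun t => δf (ψ (max t 0) x₀ - xs) with hbbdef
    have hanti : Antitone bb := by
      intro t t' htt'
      simp only [hbbdef]
      have hu0 : 0 ≤ max t 0 := le_max_right _ _
      have hu'0 : 0 ≤ max t' 0 := le_max_right _ _
      have huu' : max t 0 ≤ max t' 0 := max_le_max htt' le_rfl
      set u := max t 0
      set u' := max t' 0
      have hs0 : 0 ≤ u' - u := by linarith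
      have h2 : ψ u' x₀ = ψ (u' - u) (ψ u x₀) := by
        have := st17_semiflow Γ R σ ψ hR hψ0 hψX hψode hx₀ hu0 (u' - u) hs0
        rw [show u + (u' - u) = u' by ring] at this
        exact this
      rw [h2]
      have htri := hδ_tri (ψ (u' - u) (ψ u x₀) - xs) (ψ (u' - u) (ψ u x₀) - ψ (u' - u) xs)
      have hzero : δf ((ψ (u' - u) (ψ u x₀) - xs) - (ψ (u' - u) (ψ u x₀) - ψ (u' - u) xs))
          = 0 := by
        rw [show (ψ (u' - u) (ψ u x₀) - xs) - (ψ (u' - u) (ψ u x₀) - ψ (u' - u) xs)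
          = ψ (u' - u) xs - xs by abel]
        apply hδ_spanv
        rw [map_sub, hfix _ hs0, sub_self]
      have hne := hnonexp (ψ u x₀) xs (hψX _ hx₀ _ hu0) hXxs _ hs0
      linarith
    have habdd : BddBelow (Set.range bb) := by
      refine ⟨0, ?_⟩
      rintro _ ⟨t, rfl⟩
      exact dnn _
    have h1 : Tendsto bb atTop (𝓝 (⨅ t, bb t)) := tendsto_atTop_ciInf hanti habdd
    have h2 : Tendsto (fun k => bb (tk k)) atTop (𝓝 (⨅ t, bb t)) := h1.comp htkTop
    have h3 : Tendsto (fun k => bb (tk k)) atTop (𝓝 0) := by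
      apply hbase.congr
      intro k
      simp only [hbbdef, max_eq_left (htk0 k)]
    have h0 : (⨅ t, bb t) = 0 := tendsto_nhds_unique h2 h3
    rwa [h0] at h1
  refine ⟨xs, hXxs, hfix, ?_⟩
  rw [tendsto_iff_norm_sub_tendsto_zero]
  apply squeeze_zero' (Eventually.of_forall fun t => norm_nonneg _)
    (g := fun t => ‖Γ.toContinuousLinearMap‖ * Cv * δf (ψ (max t 0) x₀ - xs))
  · filter_upwards [eventually_ge_atTop (0:ℝ)] with t ht
    rw [← map_sub]
    have := hΓ_le_δ (ψ t x₀ - xs)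
    rw [show max t 0 = t from max_eq_left ht]
    exact this
  · have := hbb.const_mul (‖Γ.toContinuousLinearMap‖ * Cv)
    simpa using this

end st17core

/-- suppose (1) `ker Γ` is spanned by a unit vector `v` with strictly
positive entries; (2) every solution of the chemical system `Ṡ = Γ R(S)` on the
nonnegative orthant is bounded; (3) the extent system `ẋ = R(σ + Γ x)` on
`X_σ = {x : σ + Γ x ≥ 0}` is strongly monotone with respect to a closed pointed convex
cone `K` with `v ∈ interior K` (its forward complete flow `ψ` satisfies
`x₁ ≻ x₂ ⟹ ψ_t(x₁) ≫ ψ_t(x₂)` for `t > 0`).  Then there is `ζ = ζ_σ ≥ 0` such that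
for every `ρ ≥ 0` with `ρ - σ ∈ Image Γ`, the solution of `Ṡ = Γ R(S)` with `S(0) = ρ`
converges to `ζ` as `t → ∞`. -/
theorem stmt17 {n m : ℕ}
    (Γ : EuclideanSpace ℝ (Fin m) →ₗ[ℝ] EuclideanSpace ℝ (Fin n))
    (R : EuclideanSpace ℝ (Fin n) → EuclideanSpace ℝ (Fin m))
    -- R is locally Lipschitz on the nonnegative orthant
    (hR : ∀ S₀ : EuclideanSpace ℝ (Fin n), (∀ i, 0 ≤ S₀ i) →
      ∃ L : NNReal, ∃ U ∈ nhdsWithin S₀ {S : EuclideanSpace ℝ (Fin n) | ∀ i, 0 ≤ S i},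
        LipschitzOnWith L R U)
    -- the chemical system is forward complete on the nonnegative orthant and
    -- leaves it invariant
    (hcomplete : ∀ S₀ : EuclideanSpace ℝ (Fin n), (∀ i, 0 ≤ S₀ i) →
      ∃ S : ℝ → EuclideanSpace ℝ (Fin n), S 0 = S₀ ∧
        ∀ t : ℝ, 0 ≤ t → (∀ i, 0 ≤ S t i) ∧
          HasDerivWithinAt S (Γ (R (S t))) (Set.Ici 0) t)
    -- (1) ker Γ is spanned by a unit vector v with strictly positive entries
    (v : EuclideanSpace ℝ (Fin m)) (hvnorm : ‖v‖ = 1) (hvpos : ∀ i, 0 < v i)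
    (hker : LinearMap.ker Γ = Submodule.span ℝ {v})
    -- (2) every solution of the chemical system on the orthant is bounded
    (hbdd : ∀ S : ℝ → EuclideanSpace ℝ (Fin n), (∀ i, 0 ≤ S 0 i) →
      (∀ t : ℝ, 0 ≤ t → (∀ i, 0 ≤ S t i) ∧
        HasDerivWithinAt S (Γ (R (S t))) (Set.Ici 0) t) →
      ∃ M : ℝ, ∀ t : ℝ, 0 ≤ t → ‖S t‖ ≤ M)
    (σ : EuclideanSpace ℝ (Fin n)) (hσ : ∀ i, 0 ≤ σ i)
    -- K is a closed pointed convex cone in ℝ^m with v ∈ interior K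
    (K : Set (EuclideanSpace ℝ (Fin m)))
    (hKclosed : IsClosed K) (hKconv : Convex ℝ K)
    (hKcone : ∀ c : ℝ, 0 ≤ c → ∀ x ∈ K, c • x ∈ K)
    (hKpointed : ∀ x ∈ K, -x ∈ K → x = 0)
    (hv : v ∈ interior K)
    -- (3) ψ is the forward complete flow of the extent system ẋ = R(σ + Γ x) on X_σ,
    -- and it is strongly monotone
    (ψ : ℝ → EuclideanSpace ℝ (Fin m) → EuclideanSpace ℝ (Fin m))
    (hψ0 : ∀ x, (∀ i, 0 ≤ (σ + Γ x) i) → ψ 0 x = x)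
    (hψX : ∀ x, (∀ i, 0 ≤ (σ + Γ x) i) → ∀ t : ℝ, 0 ≤ t → ∀ i, 0 ≤ (σ + Γ (ψ t x)) i)
    (hψode : ∀ x, (∀ i, 0 ≤ (σ + Γ x) i) → ∀ t : ℝ, 0 ≤ t →
      HasDerivWithinAt (fun s => ψ s x) (R (σ + Γ (ψ t x))) (Set.Ici 0) t)
    (hmono : ∀ x₁, (∀ i, 0 ≤ (σ + Γ x₁) i) → ∀ x₂, (∀ i, 0 ≤ (σ + Γ x₂) i) →
      ∀ t : ℝ, 0 < t → x₁ - x₂ ∈ K → x₁ ≠ x₂ → ψ t x₁ - ψ t x₂ ∈ interior K) :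
    ∃ ζ : EuclideanSpace ℝ (Fin n), (∀ i, 0 ≤ ζ i) ∧
      ∀ ρ : EuclideanSpace ℝ (Fin n), (∀ i, 0 ≤ ρ i) → ρ - σ ∈ LinearMap.range Γ →
        ∀ S : ℝ → EuclideanSpace ℝ (Fin n), S 0 = ρ →
          (∀ t : ℝ, 0 ≤ t → (∀ i, 0 ≤ S t i) ∧
            HasDerivWithinAt S (Γ (R (S t))) (Set.Ici 0) t) →
          Tendsto S atTop (𝓝 ζ) := by
  obtain ⟨ε, hε, hball⟩ := Metric.isOpen_iff.mp isOpen_interior v hv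
  set r := ε / 2 with hrdef
  have hr : 0 < r := half_pos hε
  have hrK : ∀ u : EuclideanSpace ℝ (Fin m), ‖u‖ ≤ r → v + u ∈ K := by
    intro u hu
    apply interior_subset (hball ?_)
    rw [Metric.mem_ball, dist_eq_norm, add_sub_cancel_left]
    have : r < ε := by rw [hrdef]; linarith
    linarith
  have hΓv : Γ v = 0 := by
    have hvker : v ∈ LinearMap.ker Γ := by
      rw [hker]; exact Submodule.mem_span_singleton_self v
    exact hvker
  have hX0 : ∀ i, 0 ≤ (σ + Γ (0 : EuclideanSpace ℝ (Fin m))) i := by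
    intro i
    rw [map_zero, add_zero]
    exact hσ i
  obtain ⟨xs0, hXxs0, hfix0, htd0⟩ := st17_core Γ R σ ψ K v hR hψ0 hψX hψode hmono
    hKclosed hKconv hKcone hKpointed hvnorm hv hr hrK hΓv hker hbdd hX0
  refine ⟨σ + Γ xs0, hXxs0, ?_⟩
  intro ρ hρ hrange S hS0 hSsol
  obtain ⟨x₁, hx₁⟩ := hrange
  have hσx₁ : σ + Γ x₁ = ρ := by rw [hx₁]; abel
  have hX1 : ∀ i, 0 ≤ (σ + Γ x₁) i := by
    rw [hσx₁]; exact hρ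
  obtain ⟨xs1, hXxs1, hfix1, htd1⟩ := st17_core Γ R σ ψ K v hR hψ0 hψX hψode hmono
    hKclosed hKconv hKcone hKpointed hvnorm hv hr hrK hΓv hker hbdd hX1
  -- the limits of the two orbits agree
  have hjoint : Γ xs1 = Γ xs0 := by
    have hP0 : st17P v (xs1 - xs0) = 0 := by
      by_contra hP
      have hconst : ∀ s : ℝ, 0 ≤ s →
          st17e K v (ψ s xs1 - ψ s xs0) + st17e K v (-(ψ s xs1 - ψ s xs0)) =
          st17e K v (xs1 - xs0) + st17e K v (-(xs1 - xs0)) := by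
        intro s hs
        have hkmem : Γ ((ψ s xs1 - ψ s xs0) - (xs1 - xs0)) = 0 := by
          rw [map_sub, map_sub, map_sub, hfix1 s hs, hfix0 s hs, sub_self]
        have hmem : (ψ s xs1 - ψ s xs0) - (xs1 - xs0) ∈ LinearMap.ker Γ := hkmem
        rw [hker, Submodule.mem_span_singleton] at hmem
        obtain ⟨a, ha⟩ := hmem
        have hrew : ψ s xs1 - ψ s xs0 = (xs1 - xs0) + a • v := by
          have h' := sub_eq_iff_eq_add.mp ha.symm
          rw [h']; abel
        rw [hrew, st17_e_shift hKclosed hKconv hKcone hKpointed hvnorm hv hr hrK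
          (xs1 - xs0) a,
          show -((xs1 - xs0) + a • v) = -(xs1 - xs0) + (-a) • v by rw [neg_smul]; abel,
          st17_e_shift hKclosed hKconv hKcone hKpointed hvnorm hv hr hrK (-(xs1 - xs0)) (-a)]
        ring
      have hstrict := st17_strict Γ R σ ψ K v hR hψ0 hψX hψode hmono hKclosed hKconv
        hKcone hKpointed hvnorm hv hr hrK hΓv hXxs1 hXxs0 one_pos hP
      have h1 := hconst 1 zero_le_one
      linarith
    have hdec := st17_P_decomp hvnorm (xs1 - xs0)
    rw [hP0, zero_add] at hdec
    have hΓ0 : Γ (xs1 - xs0) = 0 := by rw [hdec, map_smul, hΓv, smul_zero]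
    rw [map_sub] at hΓ0
    exact sub_eq_zero.mp hΓ0
  -- represent the given solution via the flow
  have hS0' : S 0 = σ + Γ x₁ := by rw [hS0, hσx₁]
  have hSrep := st17_Srep Γ R σ ψ hR hψ0 hψX hψode hX1 hS0' hSsol
  have htd : Tendsto (fun t => σ + Γ (ψ t x₁)) atTop (𝓝 (σ + Γ xs0)) := by
    rw [← hjoint]
    exact tendsto_const_nhds.add htd1
  apply htd.congr'
  filter_upwards [eventually_ge_atTop (0:ℝ)] with t ht
  exact (hSrep t ht).symm
end

section
/- Consider the extent system of the futile cycle on X_σ = {x ∈ ℝ⁴ : σ + Γx ≥ 0}: ẋ₁ = k₁(σ₃ + x₂ − x₁)(σ₁ + x₄ − x₁) − k₋₁(σ₅ + x₁ − x₂), ẋ₂ = k₂(σ₅ + x₁ − x₂), ẋ₃ = k₃(σ₄ + x₄ − x₃)(σ₂ + x₂ − x₃) − k₋₃(σ₆ + x₃ − x₄), ẋ₄ = k₄(σ₆ + x₃ − x₄), with positive constants k₁, k₋₁, k₂, k₃, k₋₃, k₄ and σ ∈ ℝ⁶_{≥0}. If σ₃ + σ₅ > 0, then no solution x(t) remaining in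 X_σ on a nondegenerate time interval satisfies σ₃ + x₂(t) − x₁(t) = 0 identically on that interval; likewise, if σ₄ + σ₆ > 0, no such solution satisfies σ₄ + x₄(t) − x₃(t) = 0 identically. -/
open Filter Topology Set

/-- for the extent system of the futile cycle on
`X_σ = {x ∈ ℝ⁴ : σ + Γ x ≥ 0}` with positive rate constants, if `σ₃ + σ₅ > 0` then no
solution remaining in `X_σ` on a nondegenerate time interval `[a, b]` satisfies
`σ₃ + x₂(t) - x₁(t) = 0` identically on `[a, b]`; likewise, if `σ₄ + σ₆ > 0`, no such
solution satisfies `σ₄ + x₄(t) - x₃(t) = 0` identically. -/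
theorem stmt19 (k1 km1 k2 k3 km3 k4 : ℝ)
    (hk1 : 0 < k1) (hkm1 : 0 < km1) (hk2 : 0 < k2)
    (hk3 : 0 < k3) (hkm3 : 0 < km3) (hk4 : 0 < k4)
    (σ₁ σ₂ σ₃ σ₄ σ₅ σ₆ : ℝ)
    (hσ₁ : 0 ≤ σ₁) (hσ₂ : 0 ≤ σ₂) (hσ₃ : 0 ≤ σ₃)
    (hσ₄ : 0 ≤ σ₄) (hσ₅ : 0 ≤ σ₅) (hσ₆ : 0 ≤ σ₆)
    -- a nondegenerate time interval [a, b]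
    (a b : ℝ) (hab : a < b)
    -- x(t) is a solution of the extent system remaining in X_σ on [a, b]:
    (x₁ x₂ x₃ x₄ : ℝ → ℝ)
    -- σ + Γ x(t) ≥ 0, i.e. all species concentrations P, Q, E, F, C, D stay nonnegative
    (hX : ∀ t ∈ Set.Icc a b,
      0 ≤ σ₁ - x₁ t + x₄ t ∧ 0 ≤ σ₂ + x₂ t - x₃ t ∧ 0 ≤ σ₃ - x₁ t + x₂ t ∧
      0 ≤ σ₄ - x₃ t + x₄ t ∧ 0 ≤ σ₅ + x₁ t - x₂ t ∧ 0 ≤ σ₆ + x₃ t - x₄ t)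
    -- the extent differential equations
    (hode : ∀ t ∈ Set.Icc a b,
      HasDerivWithinAt x₁
        (k1 * (σ₃ + x₂ t - x₁ t) * (σ₁ + x₄ t - x₁ t) - km1 * (σ₅ + x₁ t - x₂ t))
        (Set.Icc a b) t ∧
      HasDerivWithinAt x₂ (k2 * (σ₅ + x₁ t - x₂ t)) (Set.Icc a b) t ∧
      HasDerivWithinAt x₃
        (k3 * (σ₄ + x₄ t - x₃ t) * (σ₂ + x₂ t - x₃ t) - km3 * (σ₆ + x₃ t - x₄ t))
        (Set.Icc a b) t ∧
      HasDerivWithinAt x₄ (k4 * (σ₆ + x₃ t - x₄ t)) (Set.Icc a b) t) :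
    (0 < σ₃ + σ₅ → ¬ ∀ t ∈ Set.Icc a b, σ₃ + x₂ t - x₁ t = 0) ∧
    (0 < σ₄ + σ₆ → ¬ ∀ t ∈ Set.Icc a b, σ₄ + x₄ t - x₃ t = 0) := by
  have ha : a ∈ Set.Icc a b := ⟨le_refl a, hab.le⟩
  have hu : UniqueDiffWithinAt ℝ (Set.Icc a b) a := (uniqueDiffOn_Icc hab) a ha
  constructor
  · intro hpos h
    obtain ⟨hd1, hd2, hd3, hd4⟩ := hode a ha
    have hE : σ₃ + x₂ a - x₁ a = 0 := h a ha
    have hsub : HasDerivWithinAt (fun t => x₂ t - x₁ t)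
        (k2 * (σ₅ + x₁ a - x₂ a) -
          (k1 * (σ₃ + x₂ a - x₁ a) * (σ₁ + x₄ a - x₁ a) - km1 * (σ₅ + x₁ a - x₂ a)))
        (Set.Icc a b) a := hd2.sub hd1
    have hconst : HasDerivWithinAt (fun t => x₂ t - x₁ t) 0 (Set.Icc a b) a := by
      have hc : HasDerivWithinAt (fun _ : ℝ => (-σ₃ : ℝ)) 0 (Set.Icc a b) a :=
        hasDerivWithinAt_const _ _ _
      exact hc.congr (fun t ht => by have := h t ht; linarith) (by linarith)
    have heq := hsub.derivWithin hu ▸ hconst.derivWithin hu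
    have hC : 0 ≤ σ₅ + x₁ a - x₂ a := (hX a ha).2.2.2.2.1
    have hCpos : 0 < σ₅ + x₁ a - x₂ a := by linarith
    rw [hE] at heq
    simp only [mul_zero, zero_mul, zero_sub] at heq
    nlinarith [mul_pos hk2 hCpos, mul_pos hkm1 hCpos]
  · intro hpos h
    obtain ⟨hd1, hd2, hd3, hd4⟩ := hode a ha
    have hF : σ₄ + x₄ a - x₃ a = 0 := h a ha
    have hsub : HasDerivWithinAt (fun t => x₄ t - x₃ t)
        (k4 * (σ₆ + x₃ a - x₄ a) -
          (k3 * (σ₄ + x₄ a - x₃ a) * (σ₂ + x₂ a - x₃ a) - km3 * (σ₆ + x₃ a - x₄ a)))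
        (Set.Icc a b) a := hd4.sub hd3
    have hconst : HasDerivWithinAt (fun t => x₄ t - x₃ t) 0 (Set.Icc a b) a := by
      have hc : HasDerivWithinAt (fun _ : ℝ => (-σ₄ : ℝ)) 0 (Set.Icc a b) a :=
        hasDerivWithinAt_const _ _ _
      exact hc.congr (fun t ht => by have := h t ht; linarith) (by linarith)
    have heq := hsub.derivWithin hu ▸ hconst.derivWithin hu
    have hD : 0 ≤ σ₆ + x₃ a - x₄ a := (hX a ha).2.2.2.2.2
    have hDpos : 0 < σ₆ + x₃ a - x₄ a := by linarith
    rw [hF] at heq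
    simp only [mul_zero, zero_mul, zero_sub] at heq
    nlinarith [mul_pos hk4 hDpos, mul_pos hkm3 hDpos]
end
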